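/- If the pleiotropy vector β ∈ ℝ^J is known (fixed), then the map from the remaining structural parameters (ω_X, α, τ_X, ω_Y, τ_Y, λ, θ) to the identified quantities is injective on the domain where τ_X, τ_Y > 0 and |λ| < τ_X τ_Y. -/

import Mathlib

/-- If the pleiotropy vector `β` is known (fixed), the map from the remaining structural
parameters `(ω_X, α, τ_X, ω_Y, τ_Y, λ, θ)` to the identified quantities
`(ω_X, α, τ_X, ω_Y′, θ′, β′, v)` — with `ω_Y′ = ω_Y − ω_X λ/τ_X²`, `θ′ = θ + λ/τ_X²`,
`β′ = β − α λ/τ_X²`, `v = τ_Y² − λ²/τ_X²` — is injective on the domain where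
`τ_X, τ_Y > 0`, `|λ| < τ_X τ_Y` and `α ≠ 0`. -/
theorem stmt_6 (J : ℕ) (β : Fin J → ℝ)
    (ωX₁ : ℝ) (α₁ : Fin J → ℝ) (τX₁ τY₁ ωY₁ lam₁ θ₁ : ℝ)
    (ωX₂ : ℝ) (α₂ : Fin J → ℝ) (τX₂ τY₂ ωY₂ lam₂ θ₂ : ℝ)
    (hτX₁ : 0 < τX₁) (hτY₁ : 0 < τY₁) (hlam₁ : |lam₁| < τX₁ * τY₁)
    (hτX₂ : 0 < τX₂) (hτY₂ : 0 < τY₂) (hlam₂ : |lam₂| < τX₂ * τY₂)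
    (hα : α₁ ≠ 0)
    (himg :
      (ωX₁, α₁, τX₁, ωY₁ - ωX₁ * lam₁ / τX₁ ^ 2, θ₁ + lam₁ / τX₁ ^ 2,
        (fun i => β i - α₁ i * lam₁ / τX₁ ^ 2), τY₁ ^ 2 - lam₁ ^ 2 / τX₁ ^ 2)
      = (ωX₂, α₂, τX₂, ωY₂ - ωX₂ * lam₂ / τX₂ ^ 2, θ₂ + lam₂ / τX₂ ^ 2,
        (fun i => β i - α₂ i * lam₂ / τX₂ ^ 2), τY₂ ^ 2 - lam₂ ^ 2 / τX₂ ^ 2)) :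
    (ωX₁, α₁, τX₁, ωY₁, τY₁, lam₁, θ₁) = (ωX₂, α₂, τX₂, ωY₂, τY₂, lam₂, θ₂) := by
  simp only [Prod.mk.injEq] at himg
  obtain ⟨h1, h2, h3, h4, h5, h6, h7⟩ := himg
  subst h1 h2 h3
  obtain ⟨i, hi⟩ := Function.ne_iff.mp hα
  have hτ : (τX₁ : ℝ) ^ 2 ≠ 0 := pow_ne_zero _ hτX₁.ne'
  have h6i := congrFun h6 i
  have hlam : lam₁ = lam₂ := by
    field_simp at h6i
    have h' : α₁ i * (lam₁ - lam₂) = 0 := by linarith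
    rcases mul_eq_zero.mp h' with h | h
    · exact absurd h hi
    · linarith
  subst hlam
  have hωY : ωY₁ = ωY₂ := by linarith
  have hθ : θ₁ = θ₂ := by linarith
  have hτY : τY₁ = τY₂ := by
    have : τY₁ ^ 2 = τY₂ ^ 2 := by linarith
    nlinarith
  simp [hωY, hθ, hτY]
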